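/- arXiv:1312.5978 — 3 statements merged into one kernel-verified Lean document; each statement's English description precedes it below -/
import Mathlib

section
/- Let F be a field and let Q_1, …, Q_n ∈ F[x_1,…,x_N] be homogeneous polynomials with Σ_{i=1}^n deg(Q_i) = n such that every monomial appearing in any Q_i has support at most s, and set Q = Π_{i=1}^n Q_i. Then for all positive integers r ≤ n, ℓ, m satisfying m + rs ≤ N/2 and m + rs ≤ ℓ/2: Dim(⟨∂^r Q⟩_{(ℓ,m)}) ≤ (n−r+1)·(rs+1)·C(n+r, r)·C(N, m+rs)·C(ℓ+n−r−1, m+rs−1), where C(a,b) denotes the binomial coefficient. -/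
open MvPolynomial

/-- Iterated partial derivative along a list of variables. -/
noncomputable def derivList {σ F : Type*} [CommSemiring F]
    (L : List σ) (P : MvPolynomial σ F) : MvPolynomial σ F :=
  L.foldr (fun x Q => MvPolynomial.pderiv x Q) P

/-- The partial derivative `∂_γ P` with respect to the monomial with exponent vector `γ`
(first-order partial derivatives iterated according to the exponent vector). -/
noncomputable def derivMon {σ F : Type*} [CommSemiring F]
    (γ : σ →₀ ℕ) (P : MvPolynomial σ F) : MvPolynomial σ F :=
  derivList (Finsupp.toMultiset γ).toList P

/-- The degree of a monomial given by its exponent vector. -/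
def monDeg {σ : Type*} (e : σ →₀ ℕ) : ℕ := e.sum fun _ c => c

/-- The space `⟨∂^r P⟩_{(ℓ,m)}` of support-`m` degree-`ℓ` shifted partial derivatives of
order `r` of `P`: the span of all `x^e · ∂_γ P` with `deg x^e = ℓ`, `supp x^e = m`,
`deg γ = r`. -/
noncomputable def shiftedSpan {σ F : Type*} [CommSemiring F]
    (r ℓ m : ℕ) (P : MvPolynomial σ F) : Submodule F (MvPolynomial σ F) :=
  Submodule.span F { Q | ∃ e γ : σ →₀ ℕ, monDeg e = ℓ ∧ e.support.card = m ∧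
    monDeg γ = r ∧ Q = MvPolynomial.monomial e (1 : F) * derivMon γ P }

/-! ### Auxiliary lemmas -/

section helpers
variable {σ : Type*} {F : Type} [Field F]

lemma monDeg_add (a b : σ →₀ ℕ) : monDeg (a + b) = monDeg a + monDeg b :=
  Finsupp.sum_add_index' (fun _ => rfl) (fun _ _ _ => rfl)

lemma monDeg_single (x : σ) (k : ℕ) : monDeg (Finsupp.single x k) = k :=
  Finsupp.sum_single_index rfl

lemma card_support_le_monDeg (e : σ →₀ ℕ) : e.support.card ≤ monDeg e := by
  rw [monDeg, Finsupp.sum, Finset.card_eq_sum_ones]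
  exact Finset.sum_le_sum fun i hi => Nat.one_le_iff_ne_zero.2 (Finsupp.mem_support_iff.1 hi)

lemma apply_le_monDeg (e : σ →₀ ℕ) (i : σ) : e i ≤ monDeg e := by
  by_cases h : i ∈ e.support
  · exact Finset.single_le_sum (fun _ _ => Nat.zero_le _) h
  · simp [Finsupp.notMem_support_iff.1 h]

lemma support_add_nat [DecidableEq σ] (a b : σ →₀ ℕ) :
    (a + b).support = a.support ∪ b.support := by
  ext i
  simp only [Finsupp.mem_support_iff, Finset.mem_union, Finsupp.add_apply, ne_eq,
    Nat.add_eq_zero, not_and_or]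

lemma monDeg_sub_single {e : σ →₀ ℕ} {x : σ} (h : e x ≠ 0) :
    monDeg (e - Finsupp.single x 1) + 1 = monDeg e := by
  have hle : Finsupp.single x 1 ≤ e := by
    rwa [Finsupp.single_le_iff, Nat.one_le_iff_ne_zero]
  have h2 : (e - Finsupp.single x 1) + Finsupp.single x 1 = e := tsub_add_cancel_of_le hle
  calc monDeg (e - Finsupp.single x 1) + 1
      = monDeg (e - Finsupp.single x 1) + monDeg (Finsupp.single x 1) := by
        rw [monDeg_single]
    _ = monDeg ((e - Finsupp.single x 1) + Finsupp.single x 1) := (monDeg_add _ _).symm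
    _ = monDeg e := by rw [h2]

lemma mem_support_pderiv {x : σ} {u : MvPolynomial σ F} {v : σ →₀ ℕ}
    (h : v ∈ (pderiv x u).support) :
    ∃ e ∈ u.support, e x ≠ 0 ∧ v = e - Finsupp.single x 1 := by
  classical
  have hu : u = ∑ e ∈ u.support, monomial e (coeff e u) := u.as_sum
  have hpd : pderiv x u
      = ∑ e ∈ u.support, monomial (e - Finsupp.single x 1) (coeff e u * e x) := by
    conv_lhs => rw [hu]
    rw [map_sum]
    exact Finset.sum_congr rfl fun e _ => pderiv_monomial
  rw [hpd] at h
  obtain ⟨e, he, hv⟩ := Finset.mem_biUnion.1 (MvPolynomial.support_sum h)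
  have hv' := MvPolynomial.support_monomial_subset hv
  rw [Finset.mem_singleton] at hv'
  refine ⟨e, he, ?_, hv'⟩
  intro hx
  rw [hx, Nat.cast_zero, mul_zero] at hv
  simp [MvPolynomial.support_monomial] at hv

lemma pderiv_finset_prod {ι : Type*} [DecidableEq ι] (x : σ) (T : Finset ι)
    (f : ι → MvPolynomial σ F) :
    pderiv x (∏ i ∈ T, f i) = ∑ j ∈ T, pderiv x (f j) * ∏ i ∈ T.erase j, f i := by
  classical
  induction T using Finset.induction_on with
  | empty => simp
  | @insert a T ha ih =>
    rw [Finset.prod_insert ha, pderiv_mul, ih, Finset.sum_insert ha, Finset.erase_insert ha,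
      Finset.mul_sum]
    congr 1
    refine Finset.sum_congr rfl fun j hj => ?_
    rw [Finset.erase_insert_of_ne (by rintro rfl; exact ha hj), Finset.prod_insert
      (fun h => ha (Finset.mem_of_mem_erase h))]
    ring

end helpers

/-! ### Counting lemmas -/

lemma card_finset_sym_le {α : Type*} [DecidableEq α] (s : Finset α) (k : ℕ) :
    (s.sym k).card ≤ (s.card + k - 1).choose k := by
  rcases s.eq_empty_or_nonempty with rfl | ⟨a0, ha0⟩
  · cases k with
    | zero => simp
    | succ k => simp
  · classical
    let g : α → ↥s := fun x => if h : x ∈ s then ⟨x, h⟩ else ⟨a0, ha0⟩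
    have hcard : (Finset.univ : Finset (Sym ↥s k)).card = (s.card + k - 1).choose k := by
      rw [Finset.card_univ, Sym.card_sym_eq_choose, Fintype.card_coe]
    rw [← hcard]
    apply Finset.card_le_card_of_injOn (Sym.map g) (fun _ _ => Finset.mem_univ _)
    intro σ hσ τ hτ h
    have key : ∀ ρ : Sym α k, ρ ∈ s.sym k → Sym.map Subtype.val (Sym.map g ρ) = ρ := by
      intro ρ hρ
      rw [Sym.map_map]
      have : ∀ a ∈ ρ, (Subtype.val ∘ g) a = a := by
        intro a ha
        have : a ∈ s := Finset.mem_sym_iff.1 hρ a ha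
        simp [g, this]
      calc Sym.map (Subtype.val ∘ g) ρ = Sym.map id ρ := Sym.map_congr this
        _ = ρ := Sym.map_id' ρ
    rw [← key σ hσ, ← key τ hτ, h]

lemma count_Wj {N : ℕ} (D j : ℕ) (hj : 1 ≤ j) (W : Finset (Fin N →₀ ℕ))
    (hW : ∀ w ∈ W, monDeg w = D ∧ w.support.card = j) :
    W.card ≤ N.choose j * (D - 1).choose (j - 1) := by
  classical
  by_cases hDj : D < j
  · have : W = ∅ := by
      rw [Finset.eq_empty_iff_forall_notMem]
      intro w hw
      obtain ⟨h1, h2⟩ := hW w hw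
      have := card_support_le_monDeg w
      omega
    simp [this]
  push_neg at hDj
  set Φ : (Fin N →₀ ℕ) → Finset (Fin N) × Multiset (Fin N) :=
    fun w => (w.support, w.support.val.bind fun i => Multiset.replicate (w i - 1) i) with hΦ
  set t : Finset (Finset (Fin N) × Multiset (Fin N)) :=
    (Finset.univ.powersetCard j).biUnion
      (fun S => ((S.sym (D - j)).image Sym.toMultiset).image fun μ => (S, μ)) with ht
  have hcount : ∀ w ∈ W, ∀ i, Multiset.count i (w.support.val.bind
      fun x => Multiset.replicate (w x - 1) x) = if i ∈ w.support then w i - 1 else 0 := by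
    intro w _ i
    rw [Multiset.count_bind]
    have hrep : ∀ x ∈ w.support, Multiset.count i (Multiset.replicate (w x - 1) x)
        = if x = i then w x - 1 else 0 := fun x _ => Multiset.count_replicate _ _ _
    calc (w.support.val.map fun x => Multiset.count i (Multiset.replicate (w x - 1) x)).sum
        = ∑ x ∈ w.support, Multiset.count i (Multiset.replicate (w x - 1) x) := rfl
      _ = ∑ x ∈ w.support, (if x = i then w x - 1 else 0) := Finset.sum_congr rfl hrep
      _ = if i ∈ w.support then w i - 1 else 0 := Finset.sum_ite_eq' _ _ _
  have hmaps : ∀ w ∈ W, Φ w ∈ t := by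
    intro w hw
    obtain ⟨h1, h2⟩ := hW w hw
    have hsum : ∑ i ∈ w.support, w i = D := h1
    have hcard : (w.support.val.bind fun i => Multiset.replicate (w i - 1) i).card = D - j := by
      rw [Multiset.card_bind]
      have e1 : (w.support.val.map (Multiset.card ∘ fun i => Multiset.replicate (w i - 1) i)).sum
          = ∑ i ∈ w.support, (w i - 1) := by
        calc (w.support.val.map (Multiset.card ∘ fun i => Multiset.replicate (w i - 1) i)).sum
            = ∑ i ∈ w.support, (Multiset.replicate (w i - 1) i).card := rfl
          _ = ∑ i ∈ w.support, (w i - 1) := by simp [Multiset.card_replicate]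
      rw [e1]
      have : ∑ i ∈ w.support, (w i - 1) + j = D := by
        rw [← h2, Finset.card_eq_sum_ones, ← Finset.sum_add_distrib, ← hsum]
        exact Finset.sum_congr rfl fun i hi => by
          have := Nat.one_le_iff_ne_zero.2 (Finsupp.mem_support_iff.1 hi); omega
      omega
    rw [ht, Finset.mem_biUnion]
    refine ⟨w.support, by simpa [Finset.mem_powersetCard_univ] using h2, ?_⟩
    rw [Finset.mem_image]
    refine ⟨(w.support.val.bind fun i => Multiset.replicate (w i - 1) i), ?_, rfl⟩
    rw [Finset.mem_image]
    refine ⟨Sym.mk _ hcard, ?_, rfl⟩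
    rw [Finset.mem_sym_iff]
    intro a ha
    have : a ∈ (w.support.val.bind fun i => Multiset.replicate (w i - 1) i) := ha
    rw [Multiset.mem_bind] at this
    obtain ⟨i, hi, hai⟩ := this
    rw [Multiset.eq_of_mem_replicate hai]
    exact hi
  have hinj : Set.InjOn Φ W := by
    intro w hw w' hw' heq
    have hsupp : w.support = w'.support := congrArg Prod.fst heq
    have hμ : (w.support.val.bind fun x => Multiset.replicate (w x - 1) x)
        = (w'.support.val.bind fun x => Multiset.replicate (w' x - 1) x) :=
      congrArg Prod.snd heq
    ext i
    by_cases hi : i ∈ w.support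
    · have c1 := hcount w hw i
      have c2 := hcount w' hw' i
      rw [← hμ, c1] at c2
      rw [← hsupp] at c2
      simp only [hi, if_pos] at c2
      have hw1 : 1 ≤ w i := Nat.one_le_iff_ne_zero.2 (Finsupp.mem_support_iff.1 hi)
      have hw2 : 1 ≤ w' i := by
        rw [hsupp] at hi
        exact Nat.one_le_iff_ne_zero.2 (Finsupp.mem_support_iff.1 hi)
      omega
    · have h1 : w i = 0 := Finsupp.notMem_support_iff.1 hi
      have h2 : w' i = 0 := by
        rw [hsupp] at hi
        exact Finsupp.notMem_support_iff.1 hi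
      rw [h1, h2]
  calc W.card ≤ t.card := Finset.card_le_card_of_injOn Φ hmaps hinj
    _ ≤ ∑ S ∈ Finset.univ.powersetCard j,
          (((S.sym (D - j)).image Sym.toMultiset).image fun μ => (S, μ)).card :=
        Finset.card_biUnion_le
    _ ≤ ∑ S ∈ Finset.univ.powersetCard j, (D - 1).choose (j - 1) := by
        refine Finset.sum_le_sum fun S hS => ?_
        have hScard : S.card = j := (Finset.mem_powersetCard_univ.1 hS)
        calc (((S.sym (D - j)).image Sym.toMultiset).image fun μ => (S, μ)).card
            ≤ ((S.sym (D - j)).image Sym.toMultiset).card := Finset.card_image_le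
          _ ≤ (S.sym (D - j)).card := Finset.card_image_le
          _ ≤ (S.card + (D - j) - 1).choose (D - j) := card_finset_sym_le _ _
          _ = (D - 1).choose (j - 1) := by
              rw [hScard]
              have h1 : j + (D - j) - 1 = D - 1 := by omega
              rw [h1]
              have h2 : D - j = (D - 1) - (j - 1) := by omega
              rw [h2, Nat.choose_symm (by omega)]
    _ = N.choose j * (D - 1).choose (j - 1) := by
        rw [Finset.sum_const, Finset.card_powersetCard, Finset.card_univ, Fintype.card_fin,
          smul_eq_mul]

lemma choose_mono_right {x : ℕ} : ∀ b a : ℕ, a ≤ b → 2 * b ≤ x → x.choose a ≤ x.choose b := by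
  intro b
  induction b with
  | zero => intro a ha _; interval_cases a; exact le_refl _
  | succ b ih =>
    intro a hab h2
    rcases Nat.lt_or_ge a (b + 1) with h | h
    · have step : x.choose b ≤ x.choose (b + 1) := by
        apply Nat.choose_le_succ_of_lt_half_left
        have : b + 1 ≤ x / 2 := (Nat.le_div_iff_mul_le (by norm_num)).2 (by omega)
        omega
      exact le_trans (ih a (by omega) (by omega)) step
    · have : a = b + 1 := by omega
      subst this; exact le_refl _

lemma sum_choose_le {n r : ℕ} (hn : 1 ≤ n) :
    ∑ k ∈ Finset.range (r + 1), n.choose k ≤ (n + r).choose r := by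
  have h1 : ∀ k ∈ Finset.range (r + 1), n.choose k ≤ (n - 1 + k).choose k := by
    intro k _
    rcases Nat.eq_zero_or_pos k with rfl | hk
    · simp
    · exact Nat.choose_le_choose k (by omega)
  calc ∑ k ∈ Finset.range (r + 1), n.choose k
      ≤ ∑ k ∈ Finset.range (r + 1), (n - 1 + k).choose k := Finset.sum_le_sum h1
    _ = ∑ k ∈ Finset.range (r + 1), (n - 1 + k).choose (n - 1) := by
        refine Finset.sum_congr rfl fun k _ => ?_
        have := Nat.choose_symm (show k ≤ n - 1 + k by omega)
        rw [show n - 1 + k - k = n - 1 by omega] at this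
        exact this.symm
    _ = ∑ i ∈ Finset.Icc (n - 1) (n - 1 + r), i.choose (n - 1) := by
        rw [← Finset.Ico_add_one_right_eq_Icc, Finset.sum_Ico_eq_sum_range]
        refine Finset.sum_congr ?_ fun k _ => by rw [Nat.add_comm (n-1) k]
        congr 1
        omega
    _ = (n - 1 + r + 1).choose (n - 1 + 1) := Nat.sum_Icc_choose _ _
    _ = (n + r).choose r := by
        rw [show n - 1 + r + 1 = n + r by omega, show n - 1 + 1 = n by omega]
        have := Nat.choose_symm (show n ≤ n + r by omega)
        rw [show n + r - n = r by omega] at this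
        exact this.symm

/-! ### The main structural lemmas -/

section main
variable {F : Type} [Field F] {N n s : ℕ}
  (Q : Fin n → MvPolynomial (Fin N) F) (deg : Fin n → ℕ)

/-- The set of "good" terms after `k` derivatives. -/
def Good (s k : ℕ) : Set (MvPolynomial (Fin N) F) :=
  {R | ∃ (T : Finset (Fin n)) (u : MvPolynomial (Fin N) F) (d : ℕ),
    Tᶜ.card ≤ k ∧ d + k = ∑ i ∈ Tᶜ, deg i ∧
    (∀ v ∈ u.support, monDeg v = d) ∧
    (∀ v ∈ u.support, v.support.card ≤ Tᶜ.card * s) ∧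
    R = u * ∏ i ∈ T, Q i}

/-- The final spanning set. -/
def BSet (s r ℓ m : ℕ) : Set (MvPolynomial (Fin N) F) :=
  {R | ∃ (T : Finset (Fin n)) (w : Fin N →₀ ℕ),
    Tᶜ.card ≤ r ∧ monDeg w + r = ℓ + ∑ i ∈ Tᶜ, deg i ∧
    m ≤ w.support.card ∧ w.support.card ≤ m + r * s ∧
    R = monomial w (1 : F) * ∏ i ∈ T, Q i}

variable (hhom : ∀ i, (Q i).IsHomogeneous (deg i))
  (hsupp : ∀ i, ∀ u ∈ (Q i).support, u.support.card ≤ s)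

include hhom hsupp in
lemma pderiv_good (x : Fin N) (k : ℕ) :
    ∀ R ∈ Good Q deg s k, pderiv x R ∈ Submodule.span F (Good Q deg s (k + 1)) := by
  rintro R ⟨T, u, d, hTk, hdk, hudeg, husupp, rfl⟩
  rw [pderiv_mul]
  apply add_mem
  · by_cases h0 : pderiv x u = 0
    · simp [h0]
    · apply Submodule.subset_span
      obtain ⟨v, hv⟩ := (MvPolynomial.support_nonempty.2 h0).exists_mem
      obtain ⟨e0, he0, he0x, -⟩ := mem_support_pderiv hv
      have hd1 : 1 ≤ d := by
        have := apply_le_monDeg e0 x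
        have := hudeg e0 he0
        omega
      refine ⟨T, pderiv x u, d - 1, hTk.trans (Nat.le_succ k), by omega, ?_, ?_, rfl⟩
      · intro v hvs
        obtain ⟨e, he, hex, rfl⟩ := mem_support_pderiv hvs
        have := monDeg_sub_single hex
        have := hudeg e he
        omega
      · intro v hvs
        obtain ⟨e, he, hex, rfl⟩ := mem_support_pderiv hvs
        exact le_trans (Finset.card_le_card Finsupp.support_tsub) (husupp e he)
  · rw [pderiv_finset_prod, Finset.mul_sum]
    apply Submodule.sum_mem
    intro j hj
    by_cases hd0 : pderiv x (Q j) = 0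
    · simp [hd0]
    · apply Submodule.subset_span
      obtain ⟨v0, hv0⟩ := (MvPolynomial.support_nonempty.2 hd0).exists_mem
      obtain ⟨e0, he0, he0x, -⟩ := mem_support_pderiv hv0
      have hdegj : monDeg e0 = deg j := by
        by_contra hne
        exact (MvPolynomial.mem_support_iff.1 he0) ((hhom j).coeff_eq_zero hne)
      have hd1 : 1 ≤ deg j := by
        have := apply_le_monDeg e0 x
        omega
      have hjT : j ∉ Tᶜ := by simpa using hj
      have hcompl : (T.erase j)ᶜ = insert j Tᶜ := by
        ext i
        by_cases h : i = j <;> simp [h]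
      have hcard : (T.erase j)ᶜ.card = Tᶜ.card + 1 := by
        rw [hcompl, Finset.card_insert_of_notMem hjT]
      refine ⟨T.erase j, u * pderiv x (Q j), d + (deg j - 1), by omega, ?_, ?_, ?_, ?_⟩
      · rw [hcompl, Finset.sum_insert hjT]; omega
      · intro v hvs
        obtain ⟨a, ha, b, hb, rfl⟩ := Finset.mem_add.1 (MvPolynomial.support_mul _ _ hvs)
        obtain ⟨e, he, hex, rfl⟩ := mem_support_pderiv hb
        have h1 := hudeg a ha
        have h2 := monDeg_sub_single hex
        have h3 : monDeg e = deg j := by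
          by_contra hne
          exact (MvPolynomial.mem_support_iff.1 he) ((hhom j).coeff_eq_zero hne)
        rw [monDeg_add]
        omega
      · intro v hvs
        obtain ⟨a, ha, b, hb, rfl⟩ := Finset.mem_add.1 (MvPolynomial.support_mul _ _ hvs)
        obtain ⟨e, he, hex, rfl⟩ := mem_support_pderiv hb
        have h1 := husupp a ha
        have h2 : (e - Finsupp.single x 1).support.card ≤ s :=
          le_trans (Finset.card_le_card Finsupp.support_tsub) (hsupp j e he)
        calc (a + (e - Finsupp.single x 1)).support.card
            ≤ a.support.card + (e - Finsupp.single x 1).support.card := by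
              rw [support_add_nat]; exact Finset.card_union_le _ _
          _ ≤ Tᶜ.card * s + s := by omega
          _ = (Tᶜ.card + 1) * s := by ring
          _ = (T.erase j)ᶜ.card * s := by rw [hcard]
      · ring

include hhom hsupp in
lemma derivList_good (L : List (Fin N)) :
    derivList L (∏ i, Q i) ∈ Submodule.span F (Good Q deg s L.length) := by
  induction L with
  | nil =>
    apply Submodule.subset_span
    refine ⟨Finset.univ, 1, 0, by simp, by simp, ?_, ?_, by simp [derivList]⟩
    · intro v hv
      have h1 : v ∈ ((monomial 0 (1:F)).support) := by
        rwa [show (monomial 0 (1:F)) = 1 by rw [MvPolynomial.monomial_zero', MvPolynomial.C_1]]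
      have := MvPolynomial.support_monomial_subset h1
      simp only [Finset.mem_singleton] at this
      simp [this, monDeg]
    · intro v hv
      have h1 : v ∈ ((monomial 0 (1:F)).support) := by
        rwa [show (monomial 0 (1:F)) = 1 by rw [MvPolynomial.monomial_zero', MvPolynomial.C_1]]
      have := MvPolynomial.support_monomial_subset h1
      simp only [Finset.mem_singleton] at this
      simp [this]
  | cons x L ih =>
    have hstep : derivList (x :: L) (∏ i, Q i) = pderiv x (derivList L (∏ i, Q i)) := rfl
    rw [hstep]
    have hle : Submodule.span F (Good Q deg s L.length) ≤
        (Submodule.span F (Good Q deg s (L.length + 1))).comap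
          (pderiv x : Derivation F (MvPolynomial (Fin N) F) _).toLinearMap :=
      Submodule.span_le.2 fun R hR => pderiv_good Q deg hhom hsupp x L.length R hR
    exact hle ih

include hhom hsupp in
lemma shiftedSpan_le_BSet (r ℓ m : ℕ) :
    shiftedSpan r ℓ m (∏ i, Q i) ≤ Submodule.span F (BSet Q deg s r ℓ m) := by
  rw [shiftedSpan, Submodule.span_le]
  rintro R ⟨e, γ, hde, hse, hdγ, rfl⟩
  have hlen : (Finsupp.toMultiset γ).toList.length = r := by
    rw [Multiset.length_toList, Finsupp.card_toMultiset]
    exact hdγ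
  have hA : derivMon γ (∏ i, Q i) ∈ Submodule.span F (Good Q deg s r) := by
    rw [derivMon, ← hlen]
    exact derivList_good Q deg hhom hsupp _
  have hkey : ∀ P ∈ Good Q deg s r,
      monomial e (1 : F) * P ∈ Submodule.span F (BSet Q deg s r ℓ m) := by
    rintro P ⟨T, u, d, hTk, hdk, hudeg, husupp, rfl⟩
    have hexp : monomial e (1 : F) * (u * ∏ i ∈ T, Q i)
        = ∑ v ∈ u.support, coeff v u • (monomial (e + v) (1 : F) * ∏ i ∈ T, Q i) := by
      conv_lhs => rw [u.as_sum]
      rw [Finset.sum_mul, Finset.mul_sum]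
      refine Finset.sum_congr rfl fun v hv => ?_
      rw [← mul_assoc, MvPolynomial.monomial_mul, one_mul, MvPolynomial.smul_eq_C_mul,
        ← mul_assoc, MvPolynomial.C_mul_monomial, mul_one]
    rw [hexp]
    apply Submodule.sum_mem
    intro v hv
    apply Submodule.smul_mem
    apply Submodule.subset_span
    refine ⟨T, e + v, hTk, ?_, ?_, ?_, rfl⟩
    · rw [monDeg_add, hde, hudeg v hv]; omega
    · rw [support_add_nat]
      calc m = e.support.card := hse.symm
        _ ≤ (e.support ∪ v.support).card := Finset.card_le_card Finset.subset_union_left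
    · rw [support_add_nat]
      calc (e.support ∪ v.support).card ≤ e.support.card + v.support.card :=
            Finset.card_union_le _ _
        _ ≤ m + r * s := by
            have h1 := husupp v hv
            have h2 : Tᶜ.card * s ≤ r * s := Nat.mul_le_mul_right s hTk
            omega
  have hle : Submodule.span F (Good Q deg s r) ≤
      (Submodule.span F (BSet Q deg s r ℓ m)).comap
        (LinearMap.mulLeft F (monomial e (1 : F))) :=
    Submodule.span_le.2 fun P hP => hkey P hP
  exact hle hA

end main

/-- Upper bound on the complexity of a single product gate: if
`Q = Π_{i=1}^n Q_i` with each `Q_i` homogeneous, `Σ_i deg Q_i = n`, and every monomial of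
every `Q_i` of support at most `s`, then for positive `r ≤ n`, `ℓ`, `m` with
`m + rs ≤ N/2` and `m + rs ≤ ℓ/2`:
`Dim⟨∂^r Q⟩_{(ℓ,m)} ≤ (n-r+1)(rs+1) C(n+r,r) C(N,m+rs) C(ℓ+n-r-1, m+rs-1)`. -/
theorem stmt3 {F : Type} [Field F] {N n s : ℕ}
    (Q : Fin n → MvPolynomial (Fin N) F) (deg : Fin n → ℕ)
    (hhom : ∀ i, (Q i).IsHomogeneous (deg i))
    (hdegsum : ∑ i, deg i = n)
    (hsupp : ∀ i, ∀ u ∈ (Q i).support, u.support.card ≤ s)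
    (r ℓ m : ℕ) (hr : 0 < r) (hrn : r ≤ n) (hℓ : 0 < ℓ) (hm : 0 < m)
    (hN : 2 * (m + r * s) ≤ N) (hℓ2 : 2 * (m + r * s) ≤ ℓ) :
    Module.finrank F (shiftedSpan r ℓ m (∏ i, Q i)) ≤
      (n - r + 1) * (r * s + 1) * (n + r).choose r * N.choose (m + r * s) *
        (ℓ + n - r - 1).choose (m + r * s - 1) := by
  classical
  set M := m + r * s with hMdef
  -- the index finsets
  set A : Finset (Finset (Fin n)) := Finset.univ.filter (fun T => Tᶜ.card ≤ r) with hA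
  set c : Finset (Fin n) → ℕ := fun T => ℓ + ∑ i ∈ Tᶜ, deg i - r with hc
  set Wfin : Finset (Fin n) → Finset (Fin N →₀ ℕ) := fun T =>
    ((Finset.univ : Finset (Fin N → Fin (c T + 1))).image
      (fun f => Finsupp.equivFunOnFinite.symm (fun i => (f i : ℕ)))).filter
      (fun w => monDeg w = c T ∧ m ≤ w.support.card ∧ w.support.card ≤ M) with hWfin
  set I : Finset (MvPolynomial (Fin N) F) :=
    A.biUnion (fun T => (Wfin T).image (fun w => monomial w (1:F) * ∏ i ∈ T, Q i)) with hI
  -- ∑ over a complement is at most n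
  have hsum_le : ∀ T : Finset (Fin n), ∑ i ∈ Tᶜ, deg i ≤ n := fun T =>
    (Finset.sum_le_sum_of_subset (Finset.subset_univ Tᶜ)).trans (le_of_eq hdegsum)
  have hceq : ∀ T : Finset (Fin n), c T = ℓ + (∑ i ∈ Tᶜ, deg i) - r := fun _ => rfl
  -- BSet is contained in I
  have hBI : BSet Q deg s r ℓ m ⊆ ↑I := by
    rintro R ⟨T, w, hT, hdeg, hm1, hm2, rfl⟩
    have hcT : monDeg w = c T := by have := hceq T; omega
    refine Finset.mem_coe.2 (Finset.mem_biUnion.2 ⟨T, ?_, Finset.mem_image.2 ⟨w, ?_, rfl⟩⟩)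
    · rw [hA, Finset.mem_filter]; exact ⟨Finset.mem_univ _, hT⟩
    · rw [hWfin, Finset.mem_filter]
      refine ⟨?_, hcT, hm1, hm2⟩
      rw [Finset.mem_image]
      have hwle : ∀ i, w i < c T + 1 := fun i => Nat.lt_succ_of_le (hcT ▸ apply_le_monDeg w i)
      refine ⟨fun i => ⟨w i, hwle i⟩, Finset.mem_univ _, ?_⟩
      have hfw : (fun i => ((⟨w i, hwle i⟩ : Fin (c T + 1)) : ℕ)) = ⇑w := rfl
      rw [hfw]
      exact Finsupp.equivFunOnFinite_symm_coe w
  -- rank bound via the spanning finset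
  have hspan : shiftedSpan r ℓ m (∏ i, Q i) ≤ Submodule.span F (I : Set _) :=
    (shiftedSpan_le_BSet Q deg hhom hsupp r ℓ m).trans (Submodule.span_mono hBI)
  have hrank : Module.finrank F (shiftedSpan r ℓ m (∏ i, Q i)) ≤ I.card := by
    have h1 : Module.finrank F (shiftedSpan r ℓ m (∏ i, Q i)) ≤
        Module.finrank F (Submodule.span F (I : Set (MvPolynomial (Fin N) F))) :=
      Submodule.finrank_mono hspan
    exact h1.trans (finrank_span_finset_le_card I)
  -- counting each Wfin T
  have hWcard : ∀ T ∈ A, (Wfin T).card ≤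
      (r * s + 1) * (N.choose M * (ℓ + n - r - 1).choose (M - 1)) := by
    intro T hTA
    have hmem : ∀ w ∈ Wfin T, w.support.card ∈ Finset.Icc m M := by
      intro w hw
      rw [hWfin, Finset.mem_filter] at hw
      exact Finset.mem_Icc.2 ⟨hw.2.2.1, hw.2.2.2⟩
    rw [Finset.card_eq_sum_card_fiberwise hmem]
    have hfiber : ∀ j ∈ Finset.Icc m M,
        ((Wfin T).filter fun w => w.support.card = j).card ≤
          N.choose M * (ℓ + n - r - 1).choose (M - 1) := by
      intro j hj
      rw [Finset.mem_Icc] at hj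
      have hj1 : 1 ≤ j := le_trans hm hj.1
      have hWmem : ∀ w ∈ (Wfin T).filter fun w => w.support.card = j,
          monDeg w = c T ∧ w.support.card = j := by
        intro w hw
        rw [Finset.mem_filter] at hw
        obtain ⟨hw1, hw2⟩ := hw
        simp only [hWfin, Finset.mem_filter] at hw1
        exact ⟨hw1.2.1, hw2⟩
      have hcnt := count_Wj (c T) j hj1 ((Wfin T).filter fun w => w.support.card = j) hWmem
      refine hcnt.trans ?_
      have hcle : c T ≤ ℓ + n - r := by
        have h1 := hsum_le T
        have h2 := hceq T
        omega
      have b1 : N.choose j ≤ N.choose M :=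
        choose_mono_right M j hj.2 (by omega)
      have b2 : (c T - 1).choose (j - 1) ≤ (ℓ + n - r - 1).choose (j - 1) :=
        Nat.choose_le_choose _ (by omega)
      have b3 : (ℓ + n - r - 1).choose (j - 1) ≤ (ℓ + n - r - 1).choose (M - 1) :=
        choose_mono_right (M - 1) (j - 1) (by omega) (by omega)
      exact Nat.mul_le_mul b1 (b2.trans b3)
    calc ∑ j ∈ Finset.Icc m M, ((Wfin T).filter fun w => w.support.card = j).card
        ≤ ∑ j ∈ Finset.Icc m M, N.choose M * (ℓ + n - r - 1).choose (M - 1) :=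
          Finset.sum_le_sum hfiber
      _ = (Finset.Icc m M).card * (N.choose M * (ℓ + n - r - 1).choose (M - 1)) := by
          rw [Finset.sum_const, smul_eq_mul]
      _ = (r * s + 1) * (N.choose M * (ℓ + n - r - 1).choose (M - 1)) := by
          rw [Nat.card_Icc]
          congr 1
          omega
  -- counting A
  have hAcard : A.card ≤ (n + r).choose r := by
    have hinj : Set.InjOn (fun T : Finset (Fin n) => Tᶜ) A := fun T _ T' _ h =>
      compl_injective h
    have hmaps : ∀ T ∈ A, Tᶜ ∈ (Finset.range (r + 1)).biUnion
        (fun k => Finset.univ.powersetCard k) := by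
      intro T hTA
      rw [hA, Finset.mem_filter] at hTA
      rw [Finset.mem_biUnion]
      exact ⟨Tᶜ.card, Finset.mem_range.2 (by omega), Finset.mem_powersetCard_univ.2 rfl⟩
    calc A.card ≤ ((Finset.range (r + 1)).biUnion (fun k => Finset.univ.powersetCard k)).card :=
          Finset.card_le_card_of_injOn _ hmaps hinj
      _ ≤ ∑ k ∈ Finset.range (r + 1), (Finset.univ.powersetCard k :
            Finset (Finset (Fin n))).card := Finset.card_biUnion_le
      _ = ∑ k ∈ Finset.range (r + 1), n.choose k := by
          refine Finset.sum_congr rfl fun k _ => ?_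
          rw [Finset.card_powersetCard, Finset.card_univ, Fintype.card_fin]
      _ ≤ (n + r).choose r := sum_choose_le (by omega)
  -- final assembly
  have hIcard : I.card ≤
      (n + r).choose r * ((r * s + 1) * (N.choose M * (ℓ + n - r - 1).choose (M - 1))) := by
    calc I.card ≤ ∑ T ∈ A, ((Wfin T).image (fun w => monomial w (1:F) * ∏ i ∈ T, Q i)).card :=
          Finset.card_biUnion_le
      _ ≤ ∑ T ∈ A, (Wfin T).card := Finset.sum_le_sum fun T _ => Finset.card_image_le
      _ ≤ ∑ T ∈ A, (r * s + 1) * (N.choose M * (ℓ + n - r - 1).choose (M - 1)) :=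
          Finset.sum_le_sum hWcard
      _ = A.card * ((r * s + 1) * (N.choose M * (ℓ + n - r - 1).choose (M - 1))) := by
          rw [Finset.sum_const, smul_eq_mul]
      _ ≤ (n + r).choose r * ((r * s + 1) * (N.choose M * (ℓ + n - r - 1).choose (M - 1))) :=
          Nat.mul_le_mul_right _ hAcard
  refine hrank.trans (hIcard.trans ?_)
  have h1 : 1 ≤ n - r + 1 := by omega
  calc (n + r).choose r * ((r * s + 1) * (N.choose M * (ℓ + n - r - 1).choose (M - 1)))
      = 1 * (r * s + 1) * (n + r).choose r * N.choose M * (ℓ + n - r - 1).choose (M - 1) := by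
        ring
    _ ≤ (n - r + 1) * (r * s + 1) * (n + r).choose r * N.choose M *
          (ℓ + n - r - 1).choose (M - 1) := by
        exact Nat.mul_le_mul_right _ (Nat.mul_le_mul_right _ (Nat.mul_le_mul_right _
          (Nat.mul_le_mul_right _ h1)))
end

section
/- Let F be a field and let C = Σ_{i=1}^{T} Π_{j=1}^{n} Q_{i,j} where for each i the polynomials Q_{i,1}, …, Q_{i,n} ∈ F[x_1,…,x_N] are homogeneous with Σ_{j=1}^n deg(Q_{i,j}) = n, and every monomial appearing in any Q_{i,j} has support at most s. Then for all positive integers r ≤ n, ℓ, m satisfying m + rs ≤ N/2 and m + rs ≤ ℓ/2: Dim(⟨∂^r C⟩_{(ℓ,m)}) ≤ T·(n−r+1)·(rs+1)·C(n+r, r)·C(N, m+rs)·C(ℓ+n−r−1, m+rs−1), where C(a,b) denotes the binomial coefficient. -/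
open MvPolynomial

namespace Stmt4Aux

variable {F : Type} [Field F] {N : ℕ}

lemma monDeg_add {σ : Type*} (a b : σ →₀ ℕ) : monDeg (a + b) = monDeg a + monDeg b := by
  simpa [monDeg] using Finsupp.sum_add_index' (by simp) (by simp)

lemma monDeg_single {σ : Type*} (x : σ) (k : ℕ) : monDeg (Finsupp.single x k) = k := by
  simp [monDeg]

lemma monDeg_eq_degree {σ : Type*} (c : σ →₀ ℕ) : monDeg c = Finsupp.degree c := rfl

lemma coord_le_monDeg (c : Fin N →₀ ℕ) (v : Fin N) : c v ≤ monDeg c := by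
  by_cases h : v ∈ c.support
  · exact Finset.single_le_sum (fun i _ => Nat.zero_le _) h
  · simp [Finsupp.notMem_support_iff.mp h]

lemma monDeg_eq_sum_univ (c : Fin N →₀ ℕ) : monDeg c = ∑ j, c j := by
  rw [monDeg, Finsupp.sum_fintype]
  intro; rfl

lemma pderiv_finset_prod {α : Type*} [DecidableEq α] (x : Fin N) (A : Finset α)
    (f : α → MvPolynomial (Fin N) F) :
    pderiv x (∏ j ∈ A, f j) = ∑ j ∈ A, pderiv x (f j) * ∏ l ∈ A.erase j, f l := by
  induction A using Finset.induction_on with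
  | empty => simp
  | insert A' s' ha ih =>
    rw [Finset.prod_insert ha, pderiv_mul, ih, Finset.sum_insert ha, Finset.erase_insert ha,
      Finset.mul_sum]
    congr 1
    apply Finset.sum_congr rfl
    intro j hj
    have hne : j ≠ A' := fun h => ha (h ▸ hj)
    rw [Finset.erase_insert_of_ne hne.symm, Finset.prod_insert
      (fun h => ha (Finset.mem_of_mem_erase h))]
    ring

lemma pderiv_eq_sum (x : Fin N) (p : MvPolynomial (Fin N) F) :
    pderiv x p = ∑ v ∈ p.support,
      monomial (v - Finsupp.single x 1) ((coeff v p) * (v x : F)) := by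
  conv_lhs => rw [← support_sum_monomial_coeff p]
  rw [map_sum]
  exact Finset.sum_congr rfl fun v _ => pderiv_monomial

lemma mem_support_pderiv {x : Fin N} {p : MvPolynomial (Fin N) F} {u : Fin N →₀ ℕ}
    (hu : u ∈ (pderiv x p).support) :
    ∃ v ∈ p.support, v x ≠ 0 ∧ u = v - Finsupp.single x 1 := by
  classical
  rw [pderiv_eq_sum] at hu
  obtain ⟨v, hv, hu⟩ := Finset.mem_biUnion.mp (MvPolynomial.support_sum hu)
  rw [MvPolynomial.support_monomial] at hu
  split_ifs at hu with h
  · simp at hu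
  · refine ⟨v, hv, ?_, (Finset.mem_singleton.mp hu)⟩
    intro h0
    exact h (by simp [h0])


lemma monDeg_of_mem_support {p : MvPolynomial (Fin N) F} {d : ℕ} (hp : p.IsHomogeneous d)
    {v : Fin N →₀ ℕ} (hv : v ∈ p.support) : monDeg v = d := by
  have h := hp (MvPolynomial.mem_support_iff.mp hv)
  rw [monDeg_eq_degree, Finsupp.degree_eq_weight_one]
  exact h

variable {n : ℕ}

def gset (Q : Fin n → MvPolynomial (Fin N) F) (dg : Fin n → ℕ) (s k : ℕ) :
    Set (MvPolynomial (Fin N) F) :=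
  {P | ∃ (A : Finset (Fin n)) (c : Fin N →₀ ℕ),
    n ≤ A.card + k ∧ c.support.card ≤ (n - A.card) * s ∧
    monDeg c + ∑ j ∈ A, dg j = n - k ∧ P = monomial c (1 : F) * ∏ j ∈ A, Q j}

lemma step (Q : Fin n → MvPolynomial (Fin N) F) (dg : Fin n → ℕ) (s : ℕ)
    (hhom : ∀ j, (Q j).IsHomogeneous (dg j))
    (hs : ∀ j, ∀ u ∈ (Q j).support, u.support.card ≤ s) (x : Fin N) (k : ℕ) :
    ∀ g ∈ gset Q dg s k, pderiv x g ∈ Submodule.span F (gset Q dg s (k + 1)) := by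
  rintro g ⟨A, c, hA, hc, hd, rfl⟩
  have hAn : A.card ≤ n := by simpa using Finset.card_le_card A.subset_univ
  rw [pderiv_mul]
  apply Submodule.add_mem
  · rw [pderiv_monomial]
    by_cases hcx : c x = 0
    · simp [hcx]
    · have hle : Finsupp.single x 1 ≤ c :=
        Finsupp.single_le_iff.mpr (Nat.one_le_iff_ne_zero.mpr hcx)
      have hsum : monDeg (c - Finsupp.single x 1) + 1 = monDeg c := by
        have h2 := monDeg_add (c - Finsupp.single x 1) (Finsupp.single x 1)
        rw [tsub_add_cancel_of_le hle] at h2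
        simpa [monDeg_single] using h2.symm
      have h1 : (monomial (c - Finsupp.single x 1)) ((1:F) * (c x : F))
          = (c x : F) • (monomial (c - Finsupp.single x 1)) (1:F) := by
        simp [MvPolynomial.smul_monomial]
      rw [h1, smul_mul_assoc]
      apply Submodule.smul_mem
      apply Submodule.subset_span
      refine ⟨A, c - Finsupp.single x 1, by omega, ?_, by omega, rfl⟩
      exact le_trans (Finset.card_le_card Finsupp.support_tsub) hc
  · rw [pderiv_finset_prod, Finset.mul_sum]
    apply Submodule.sum_mem
    intro j hj
    rw [pderiv_eq_sum, Finset.sum_mul, Finset.mul_sum]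
    apply Submodule.sum_mem
    intro v hv
    by_cases hvx : v x = 0
    · simp [hvx]
    · set u := v - Finsupp.single x 1 with hu
      have hle : Finsupp.single x 1 ≤ v :=
        Finsupp.single_le_iff.mpr (Nat.one_le_iff_ne_zero.mpr hvx)
      have hdegv : monDeg v = dg j := monDeg_of_mem_support (hhom j) hv
      have hdegu : monDeg u + 1 = dg j := by
        have h2 := monDeg_add u (Finsupp.single x 1)
        rw [hu, tsub_add_cancel_of_le hle] at h2
        rw [← hdegv, h2, monDeg_single]
      have hsuppu : u.support.card ≤ s :=
        le_trans (Finset.card_le_card Finsupp.support_tsub) (hs j v hv)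
      have hjA : (A.erase j).card = A.card - 1 := Finset.card_erase_of_mem hj
      have hApos : 1 ≤ A.card := Finset.card_pos.mpr ⟨j, hj⟩
      have hsum : dg j + ∑ l ∈ A.erase j, dg l = ∑ l ∈ A, dg l := Finset.add_sum_erase A dg hj
      have heq : (monomial c (1:F)) *
            ((monomial u) (coeff v (Q j) * (v x : F)) * ∏ l ∈ A.erase j, Q l)
          = (coeff v (Q j) * (v x : F)) •
            ((monomial (c + u) (1:F)) * ∏ l ∈ A.erase j, Q l) := by
        simp only [← smul_mul_assoc, MvPolynomial.smul_monomial, ← mul_assoc,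
          MvPolynomial.monomial_mul, smul_eq_mul, mul_one, one_mul]
      rw [heq]
      apply Submodule.smul_mem
      apply Submodule.subset_span
      refine ⟨A.erase j, c + u, by omega, ?_, ?_, rfl⟩
      · have h1 : (c + u).support.card ≤ c.support.card + u.support.card :=
          le_trans (Finset.card_le_card Finsupp.support_add) (Finset.card_union_le _ _)
        have h2 : n - (A.erase j).card = (n - A.card) + 1 := by omega
        rw [h2, add_mul, one_mul]
        omega
      · rw [monDeg_add]
        omega


lemma derivList_mem (Q : Fin n → MvPolynomial (Fin N) F) (dg : Fin n → ℕ) (s : ℕ)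
    (hhom : ∀ j, (Q j).IsHomogeneous (dg j))
    (hs : ∀ j, ∀ u ∈ (Q j).support, u.support.card ≤ s) (hdg : ∑ j, dg j = n) :
    ∀ L : List (Fin N), derivList L (∏ j, Q j) ∈ Submodule.span F (gset Q dg s L.length) := by
  intro L
  induction L with
  | nil =>
    apply Submodule.subset_span
    refine ⟨Finset.univ, 0, by simp, by simp, by simpa [monDeg] using hdg, by simp [derivList]⟩
  | cons x L ih =>
    have hmap : Submodule.map (pderiv x).toLinearMap
        (Submodule.span F (gset Q dg s L.length)) ≤
        Submodule.span F (gset Q dg s (L.length + 1)) := by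
      rw [Submodule.map_span]
      apply Submodule.span_le.mpr
      rintro _ ⟨g, hg, rfl⟩
      exact step Q dg s hhom hs x L.length g hg
    exact hmap ⟨_, ih, rfl⟩

lemma derivList_sum {T : ℕ} (L : List (Fin N)) (f : Fin T → MvPolynomial (Fin N) F) :
    derivList L (∑ i, f i) = ∑ i, derivList L (f i) := by
  induction L with
  | nil => rfl
  | cons x L ih =>
    show pderiv x (derivList L (∑ i, f i)) = _
    rw [ih, map_sum]
    rfl

lemma len_toList (γ : Fin N →₀ ℕ) : (Finsupp.toMultiset γ).toList.length = monDeg γ := by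
  rw [Multiset.length_toList, Finsupp.card_toMultiset]; rfl

def fset (Q : Fin n → MvPolynomial (Fin N) F) (dg : Fin n → ℕ) (s r ℓ m : ℕ) :
    Set (MvPolynomial (Fin N) F) :=
  {P | ∃ (A : Finset (Fin n)) (c : Fin N →₀ ℕ),
    n ≤ A.card + r ∧ m ≤ c.support.card ∧ c.support.card ≤ m + r * s ∧
    monDeg c + ∑ j ∈ A, dg j = ℓ + (n - r) ∧ P = monomial c (1 : F) * ∏ j ∈ A, Q j}

lemma shift_mem (Q : Fin n → MvPolynomial (Fin N) F) (dg : Fin n → ℕ) (s r ℓ m : ℕ)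
    (e : Fin N →₀ ℕ) (he : monDeg e = ℓ) (hem : e.support.card = m)
    (g : MvPolynomial (Fin N) F) (hg : g ∈ Submodule.span F (gset Q dg s r)) :
    monomial e (1:F) * g ∈ Submodule.span F (fset Q dg s r ℓ m) := by
  have hmap : Submodule.map (LinearMap.mulLeft F (monomial e (1:F)))
      (Submodule.span F (gset Q dg s r)) ≤ Submodule.span F (fset Q dg s r ℓ m) := by
    rw [Submodule.map_span]
    apply Submodule.span_le.mpr
    rintro _ ⟨g, ⟨A, c, hA, hc, hdeg, rfl⟩, rfl⟩
    apply Submodule.subset_span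
    refine ⟨A, e + c, hA, ?_, ?_, ?_, ?_⟩
    · rw [← hem]
      apply Finset.card_le_card
      intro i hi
      simp only [Finsupp.mem_support_iff, Finsupp.add_apply] at *
      omega
    · have h1 : (e + c).support.card ≤ e.support.card + c.support.card :=
        le_trans (Finset.card_le_card Finsupp.support_add) (Finset.card_union_le _ _)
      have hAn : A.card ≤ n := by simpa using Finset.card_le_card A.subset_univ
      have h2 : (n - A.card) * s ≤ r * s := Nat.mul_le_mul_right s (by omega)
      omega
    · rw [monDeg_add, he]
      omega
    · show monomial e (1:F) * (monomial c (1:F) * ∏ j ∈ A, Q j) = _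
      rw [← mul_assoc, MvPolynomial.monomial_mul, mul_one]
  exact hmap ⟨g, hg, rfl⟩

lemma shiftedSpan_le {T : ℕ} (Q : Fin T → Fin n → MvPolynomial (Fin N) F)
    (dg : Fin T → Fin n → ℕ) (s r ℓ m : ℕ)
    (hhom : ∀ i j, (Q i j).IsHomogeneous (dg i j))
    (hdg : ∀ i, ∑ j, dg i j = n)
    (hs : ∀ i j, ∀ u ∈ (Q i j).support, u.support.card ≤ s) :
    shiftedSpan r ℓ m (∑ i, ∏ j, Q i j) ≤
      Submodule.span F (⋃ i, fset (Q i) (dg i) s r ℓ m) := by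
  apply Submodule.span_le.mpr
  rintro _ ⟨e, γ, he, hem, hγ, rfl⟩
  simp only [derivMon]
  rw [derivList_sum, Finset.mul_sum]
  apply Submodule.sum_mem
  intro i _
  have h1 : derivList γ.toMultiset.toList (∏ j, Q i j) ∈
      Submodule.span F (gset (Q i) (dg i) s r) := by
    have h := derivList_mem (Q i) (dg i) s (hhom i) (hs i) (hdg i) γ.toMultiset.toList
    rwa [len_toList, hγ] at h
  exact Submodule.span_mono (Set.subset_iUnion _ i)
    (shift_mem (Q i) (dg i) s r ℓ m e he hem _ h1)


/-- partial sums of a monomial exponent vector -/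
def ps (c : Fin N →₀ ℕ) (i : Fin N) : ℕ := ∑ j ∈ Finset.Iic i, c j

lemma ps_strictMonoOn (c : Fin N →₀ ℕ) : StrictMonoOn (ps c) c.support := by
  intro i _ i' hi' hlt
  apply Finset.sum_lt_sum_of_subset (Finset.Iic_subset_Iic.mpr hlt.le)
    (Finset.mem_Iic.mpr le_rfl) (by simp [hlt.not_ge]) ?_ (fun j _ _ => Nat.zero_le _)
  simpa [Nat.pos_iff_ne_zero, Finsupp.mem_support_iff] using hi'

lemma ps_le (c : Fin N →₀ ℕ) (i : Fin N) : ps c i ≤ monDeg c := by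
  rw [monDeg_eq_sum_univ]
  exact Finset.sum_le_sum_of_subset (Finset.subset_univ _)

lemma ps_pos (c : Fin N →₀ ℕ) {i : Fin N} (hi : i ∈ c.support) : 1 ≤ ps c i := by
  calc 1 ≤ c i := by
        simpa [Nat.one_le_iff_ne_zero, Finsupp.mem_support_iff] using hi
    _ ≤ ps c i := Finset.single_le_sum (f := fun j => c j)
        (fun _ _ => Nat.zero_le _) (Finset.mem_Iic.mpr le_rfl)

lemma ps_eq_filter (c : Fin N →₀ ℕ) (i : Fin N) :
    ps c i = ∑ j ∈ c.support.filter (· ≤ i), c j := by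
  rw [ps]
  refine (Finset.sum_subset ?_ ?_).symm
  · intro j hj
    exact Finset.mem_Iic.mpr (Finset.mem_filter.mp hj).2
  · intro j hj hj2
    have : j ∉ c.support := fun h => hj2 (Finset.mem_filter.mpr ⟨h, Finset.mem_Iic.mp hj⟩)
    simpa [Finsupp.mem_support_iff, not_not] using this

lemma ps_max (c : Fin N →₀ ℕ) (h : c.support.Nonempty) :
    ps c (c.support.max' h) = monDeg c := by
  rw [ps_eq_filter, monDeg, Finsupp.sum]
  apply Finset.sum_congr ?_ (fun _ _ => rfl)
  ext j
  simp only [Finset.mem_filter, and_iff_left_iff_imp]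
  exact fun hj => Finset.le_max' _ _ hj

lemma comp_count (S : Finset (Fin N →₀ ℕ)) (d t : ℕ) (ht : 1 ≤ t) :
    (S.filter fun c => monDeg c = d ∧ c.support.card = t).card ≤
      N.choose t * (d - 1).choose (t - 1) := by
  classical
  have hcard : ((Finset.univ : Finset (Fin N)).powersetCard t ×ˢ
      (Finset.Icc 1 (d-1)).powersetCard (t-1)).card = N.choose t * (d-1).choose (t-1) := by
    rw [Finset.card_product, Finset.card_powersetCard, Finset.card_powersetCard,
      Finset.card_univ, Fintype.card_fin, Nat.card_Icc]
    have h9 : d - 1 + 1 - 1 = d - 1 := by omega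
    rw [h9]
  rw [← hcard]
  apply Finset.card_le_card_of_injOn (fun c => (c.support, (c.support.image (ps c)).erase d))
  · intro c hc
    simp only [Finset.mem_coe, Finset.mem_filter] at hc
    obtain ⟨-, hd, htc⟩ := hc
    have hne : c.support.Nonempty := Finset.card_pos.mp (by omega)
    have himg_card : (c.support.image (ps c)).card = t := by
      rw [Finset.card_image_of_injOn (ps_strictMonoOn c).injOn, htc]
    have hd_mem : d ∈ c.support.image (ps c) :=
      Finset.mem_image.mpr ⟨c.support.max' hne, c.support.max'_mem hne, by rw [ps_max, hd]⟩
    refine Finset.mem_product.mpr ⟨Finset.mem_powersetCard.mpr ⟨Finset.subset_univ _, htc⟩,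
      Finset.mem_powersetCard.mpr ⟨?_, ?_⟩⟩
    · intro y hy
      obtain ⟨hy1, hy2⟩ := Finset.mem_erase.mp hy
      obtain ⟨i, hi, rfl⟩ := Finset.mem_image.mp hy2
      have h1 := ps_pos c hi
      have h2 := ps_le c i
      rw [hd] at h2
      exact Finset.mem_Icc.mpr ⟨h1, by omega⟩
    · rw [Finset.card_erase_of_mem hd_mem, himg_card]
  · intro c hc c' hc' heq
    simp only [Finset.mem_coe, Finset.mem_filter] at hc hc'
    obtain ⟨-, hd, htc⟩ := hc
    obtain ⟨-, hd', htc'⟩ := hc'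
    have hS : c.support = c'.support := congrArg Prod.fst heq
    have hPsi : (c.support.image (ps c)).erase d = (c'.support.image (ps c')).erase d :=
      congrArg Prod.snd heq
    have hne : c.support.Nonempty := Finset.card_pos.mp (by omega)
    have hne' : c'.support.Nonempty := Finset.card_pos.mp (by omega)
    have hd_mem : d ∈ c.support.image (ps c) :=
      Finset.mem_image.mpr ⟨c.support.max' hne, c.support.max'_mem hne, by rw [ps_max, hd]⟩
    have hd_mem' : d ∈ c'.support.image (ps c') :=
      Finset.mem_image.mpr ⟨c'.support.max' hne', c'.support.max'_mem hne', by rw [ps_max, hd']⟩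
    have himg : c.support.image (ps c) = c'.support.image (ps c') := by
      rw [← Finset.insert_erase hd_mem, ← Finset.insert_erase hd_mem', hPsi]
    have himg_card : (c.support.image (ps c)).card = t := by
      rw [Finset.card_image_of_injOn (ps_strictMonoOn c).injOn, htc]
    -- the order embedding of the common support
    have hcardS : c.support.card = t := htc
    set emb := c.support.orderEmbOfFin hcardS with hemb
    have hgc : (fun k => ps c (emb k)) =
        (c.support.image (ps c)).orderEmbOfFin himg_card := by
      apply Finset.orderEmbOfFin_unique
      · exact fun k => Finset.mem_image_of_mem _ (Finset.orderEmbOfFin_mem _ _ _)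
      · intro a b hab
        exact ps_strictMonoOn c (Finset.orderEmbOfFin_mem _ _ _)
          (Finset.orderEmbOfFin_mem _ _ _) ((Finset.orderEmbOfFin _ hcardS).strictMono hab)
    have hgc' : (fun k => ps c' (emb k)) =
        (c.support.image (ps c)).orderEmbOfFin himg_card := by
      apply Finset.orderEmbOfFin_unique
      · intro k
        rw [himg]
        have hk : emb k ∈ c'.support := by rw [← hS]; exact Finset.orderEmbOfFin_mem _ _ _
        exact Finset.mem_image_of_mem _ hk
      · intro a b hab
        have h1 : emb a ∈ c'.support := by rw [← hS]; exact Finset.orderEmbOfFin_mem _ _ _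
        have h2 : emb b ∈ c'.support := by rw [← hS]; exact Finset.orderEmbOfFin_mem _ _ _
        exact ps_strictMonoOn c' h1 h2 ((Finset.orderEmbOfFin _ hcardS).strictMono hab)
    have hpsS : ∀ i ∈ c.support, ps c i = ps c' i := by
      intro i hi
      have hrange : ∃ k, emb k = i := by
        have h1 : (i : Fin N) ∈ Set.range emb := by
          rw [hemb, Finset.range_orderEmbOfFin]
          exact hi
        exact h1
      obtain ⟨k, rfl⟩ := hrange
      rw [congrFun hgc k, congrFun hgc' k]
    have hps : ∀ i, ps c i = ps c' i := by
      intro i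
      rw [ps_eq_filter, ps_eq_filter, ← hS]
      by_cases hne2 : (c.support.filter (· ≤ i)).Nonempty
      · have hMmem := Finset.max'_mem _ hne2
        have hM2 : (c.support.filter (· ≤ i)).max' hne2 ≤ i :=
          (Finset.mem_filter.mp hMmem).2
        have hM1 : (c.support.filter (· ≤ i)).max' hne2 ∈ c.support :=
          (Finset.mem_filter.mp hMmem).1
        have hfil : c.support.filter (· ≤ i) =
            c.support.filter (· ≤ (c.support.filter (· ≤ i)).max' hne2) := by
          ext j
          simp only [Finset.mem_filter]
          constructor
          · rintro ⟨hj1, hj2⟩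
            refine ⟨hj1, Finset.le_max' _ _ ?_⟩
            exact Finset.mem_filter.mpr ⟨hj1, hj2⟩
          · rintro ⟨hj1, hj2⟩
            exact ⟨hj1, le_trans hj2 hM2⟩
        rw [hfil]
        have h3 := hpsS _ hM1
        rw [ps_eq_filter, ps_eq_filter, ← hS] at h3
        exact h3
      · rw [Finset.not_nonempty_iff_eq_empty.mp hne2]
        simp
    have key : ∀ k : ℕ, ∀ i : Fin N, (i : ℕ) = k → c i = c' i := by
      intro k
      induction k using Nat.strong_induction_on with
      | _ k ih =>
        intro i hik
        have h1 := hps i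
        rw [ps, ps, ← Finset.Iio_insert, Finset.sum_insert (by simp),
          Finset.sum_insert (by simp)] at h1
        have h2 : ∑ j ∈ Finset.Iio i, c j = ∑ j ∈ Finset.Iio i, c' j := by
          apply Finset.sum_congr rfl
          intro j hj
          have hji : (j : ℕ) < k := by
            rw [← hik]
            exact Fin.lt_def.mp (Finset.mem_Iio.mp hj)
          exact ih j hji j rfl
        omega
    exact Finsupp.ext fun i => key i i rfl


lemma choose_mono_bot {D a b : ℕ} (hab : a ≤ b) (h2 : 2 * b ≤ D) :
    D.choose a ≤ D.choose b := by
  induction b with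
  | zero => simp [Nat.le_zero.mp hab]
  | succ k ih =>
    rcases Nat.lt_or_ge a (k+1) with h | h
    · have h1 : D.choose a ≤ D.choose k := ih (by omega) (by omega)
      have h3 : k < D / 2 := by omega
      exact le_trans h1 (Nat.choose_le_succ_of_lt_half_left h3)
    · have h4 : a = k + 1 := by omega
      simp [h4]

lemma sum_choose_le (a r : ℕ) : ∑ j ∈ Finset.range (r+1), a.choose j ≤ (a+r).choose r := by
  induction r with
  | zero => simp
  | succ k ih =>
    rw [Finset.sum_range_succ]
    have h1 : a.choose (k+1) ≤ (a+k).choose (k+1) := Nat.choose_le_choose _ (by omega)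
    have h2 : (a+(k+1)).choose (k+1) = (a+k).choose k + (a+k).choose (k+1) :=
      Nat.choose_succ_succ (a+k) k
    omega

end Stmt4Aux

open Stmt4Aux

/-- Upper bound on the complexity of a bounded bottom support
homogeneous ΣΠΣΠ circuit: if `C = Σ_{i=1}^T Π_{j=1}^n Q_{i,j}` with each `Q_{i,j}`
homogeneous, `Σ_j deg Q_{i,j} = n` for each `i`, and every monomial of every `Q_{i,j}`
of support at most `s`, then for positive `r ≤ n`, `ℓ`, `m` with `m + rs ≤ N/2` and
`m + rs ≤ ℓ/2`:
`Dim⟨∂^r C⟩_{(ℓ,m)} ≤ T (n-r+1)(rs+1) C(n+r,r) C(N,m+rs) C(ℓ+n-r-1, m+rs-1)`. -/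
theorem stmt4 {F : Type} [Field F] {N n s T : ℕ}
    (Q : Fin T → Fin n → MvPolynomial (Fin N) F) (deg : Fin T → Fin n → ℕ)
    (hhom : ∀ i j, (Q i j).IsHomogeneous (deg i j))
    (hdegsum : ∀ i, ∑ j, deg i j = n)
    (hsupp : ∀ i j, ∀ u ∈ (Q i j).support, u.support.card ≤ s)
    (r ℓ m : ℕ) (hr : 0 < r) (hrn : r ≤ n) (hℓ : 0 < ℓ) (hm : 0 < m)
    (hN : 2 * (m + r * s) ≤ N) (hℓ2 : 2 * (m + r * s) ≤ ℓ) :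
    Module.finrank F (shiftedSpan r ℓ m (∑ i, ∏ j, Q i j)) ≤
      T * ((n - r + 1) * (r * s + 1) * (n + r).choose r * N.choose (m + r * s) *
        (ℓ + n - r - 1).choose (m + r * s - 1)) := by
  classical
  let Cbig : Finset (Fin N →₀ ℕ) := Finset.Iic (Finsupp.equivFunOnFinite.symm fun _ => ℓ + n)
  let Spair : Fin T → Finset (Finset (Fin n) × (Fin N →₀ ℕ)) := fun i =>
    (Finset.univ ×ˢ Cbig).filter fun p => n ≤ p.1.card + r ∧ m ≤ p.2.support.card ∧
      p.2.support.card ≤ m + r * s ∧ monDeg p.2 + ∑ j ∈ p.1, deg i j = ℓ + (n - r)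
  let f : Fin T → Finset (Fin n) × (Fin N →₀ ℕ) → MvPolynomial (Fin N) F :=
    fun i p => monomial p.2 (1:F) * ∏ j ∈ p.1, Q i j
  let G : Finset (MvPolynomial (Fin N) F) := Finset.univ.biUnion fun i => (Spair i).image (f i)
  have hsub : ∀ i, fset (Q i) (deg i) s r ℓ m ⊆ ↑G := by
    intro i P hP
    obtain ⟨A, c, h1, h2, h3, h4, rfl⟩ := hP
    refine Finset.mem_coe.mpr (Finset.mem_biUnion.mpr ⟨i, Finset.mem_univ _,
      Finset.mem_image.mpr ⟨(A, c), ?_, rfl⟩⟩)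
    refine Finset.mem_filter.mpr ⟨Finset.mem_product.mpr ⟨Finset.mem_univ _, ?_⟩, h1, h2, h3, h4⟩
    refine Finset.mem_Iic.mpr ?_
    rw [Finsupp.le_def]
    intro v
    have h5 := coord_le_monDeg c v
    have h6 : monDeg c ≤ ℓ + n := by omega
    simpa using le_trans h5 h6
  have hle : shiftedSpan r ℓ m (∑ i, ∏ j, Q i j) ≤ Submodule.span F (↑G : Set _) := by
    refine le_trans (shiftedSpan_le Q deg s r ℓ m hhom hdegsum hsupp) ?_
    exact Submodule.span_mono (Set.iUnion_subset hsub)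
  have hfin : Module.finrank F (shiftedSpan r ℓ m (∑ i, ∏ j, Q i j)) ≤ G.card :=
    le_trans (Submodule.finrank_mono hle) (finrank_span_finset_le_card G)
  refine le_trans hfin ?_
  have hGcard : G.card ≤ ∑ i : Fin T, (Spair i).card :=
    le_trans Finset.card_biUnion_le (Finset.sum_le_sum fun i _ => Finset.card_image_le)
  have hSpaircard : ∀ i, (Spair i).card ≤
      (n + r).choose r * ((r * s + 1) * (N.choose (m + r * s) *
        (ℓ + n - r - 1).choose (m + r * s - 1))) := by
    intro i
    have hCset : ∀ A : Finset (Fin n),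
        (Cbig.filter fun c => m ≤ c.support.card ∧ c.support.card ≤ m + r * s ∧
          monDeg c + ∑ j ∈ A, deg i j = ℓ + (n - r)).card ≤
        (r * s + 1) * (N.choose (m + r * s) * (ℓ + n - r - 1).choose (m + r * s - 1)) := by
      intro A
      have hsub3 : (Cbig.filter fun c => m ≤ c.support.card ∧ c.support.card ≤ m + r * s ∧
          monDeg c + ∑ j ∈ A, deg i j = ℓ + (n - r)) ⊆
          (Finset.Icc m (m + r * s)).biUnion fun t =>
          Cbig.filter fun c => monDeg c = ℓ + (n - r) - ∑ j ∈ A, deg i j ∧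
            c.support.card = t := by
        intro c hc
        obtain ⟨hc1, hc2, hc3, hc4⟩ := Finset.mem_filter.mp hc
        exact Finset.mem_biUnion.mpr ⟨c.support.card, Finset.mem_Icc.mpr ⟨hc2, hc3⟩,
          Finset.mem_filter.mpr ⟨hc1, by omega, rfl⟩⟩
      refine le_trans (Finset.card_le_card hsub3) (le_trans Finset.card_biUnion_le ?_)
      have hbound : ∀ t ∈ Finset.Icc m (m + r * s),
          (Cbig.filter fun c => monDeg c = ℓ + (n - r) - ∑ j ∈ A, deg i j ∧
            c.support.card = t).card ≤
          N.choose (m + r * s) * (ℓ + n - r - 1).choose (m + r * s - 1) := by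
        intro t htt
        obtain ⟨ht1, ht2⟩ := Finset.mem_Icc.mp htt
        refine le_trans (comp_count Cbig (ℓ + (n - r) - ∑ j ∈ A, deg i j) t (by omega)) ?_
        apply Nat.mul_le_mul
        · exact choose_mono_bot ht2 hN
        · calc (ℓ + (n - r) - (∑ j ∈ A, deg i j) - 1).choose (t - 1)
              ≤ (ℓ + n - r - 1).choose (t - 1) := Nat.choose_le_choose _ (by omega)
            _ ≤ (ℓ + n - r - 1).choose (m + r * s - 1) :=
                choose_mono_bot (by omega) (by omega)
      refine le_trans (Finset.sum_le_sum hbound) ?_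
      rw [Finset.sum_const, Nat.card_Icc, smul_eq_mul]
      have h7 : m + r * s + 1 - m = r * s + 1 := by omega
      rw [h7]
    have hsub2 : Spair i ⊆
        (Finset.univ.filter fun A : Finset (Fin n) => n ≤ A.card + r).biUnion fun A =>
        {A} ×ˢ (Cbig.filter fun c => m ≤ c.support.card ∧ c.support.card ≤ m + r * s ∧
          monDeg c + ∑ j ∈ A, deg i j = ℓ + (n - r)) := by
      intro p hp
      obtain ⟨hp1, hp2⟩ := Finset.mem_filter.mp hp
      obtain ⟨hpA, hpc⟩ := Finset.mem_product.mp hp1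
      exact Finset.mem_biUnion.mpr ⟨p.1, Finset.mem_filter.mpr ⟨Finset.mem_univ _, hp2.1⟩,
        Finset.mem_product.mpr ⟨Finset.mem_singleton_self _,
          Finset.mem_filter.mpr ⟨hpc, hp2.2.1, hp2.2.2.1, hp2.2.2.2⟩⟩⟩
    have hAfinscard : (Finset.univ.filter fun A : Finset (Fin n) => n ≤ A.card + r).card ≤
        (n + r).choose r := by
      have hinj : (Finset.univ.filter fun A : Finset (Fin n) => n ≤ A.card + r).card ≤
          (Finset.univ.filter fun B : Finset (Fin n) => B.card ≤ r).card := by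
        apply Finset.card_le_card_of_injOn (fun A => Aᶜ)
        · intro A hA
          simp only [Finset.mem_coe, Finset.mem_filter, Finset.mem_univ, true_and] at hA ⊢
          rw [Finset.card_compl, Fintype.card_fin]
          omega
        · intro a _ b _ hab
          simpa using congrArg (·ᶜ) hab
      refine le_trans hinj ?_
      have hsub4 : (Finset.univ.filter fun B : Finset (Fin n) => B.card ≤ r) ⊆
          (Finset.range (r + 1)).biUnion fun j => Finset.univ.powersetCard j := by
        intro B hB
        obtain ⟨-, hB2⟩ := Finset.mem_filter.mp (Finset.mem_coe.mpr hB)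
        exact Finset.mem_biUnion.mpr ⟨B.card, Finset.mem_range.mpr (by omega),
          Finset.mem_powersetCard.mpr ⟨Finset.subset_univ _, rfl⟩⟩
      refine le_trans (Finset.card_le_card hsub4) (le_trans Finset.card_biUnion_le ?_)
      calc ∑ j ∈ Finset.range (r + 1),
            (Finset.powersetCard j (Finset.univ : Finset (Fin n))).card
          = ∑ j ∈ Finset.range (r + 1), n.choose j := by
            apply Finset.sum_congr rfl
            intro j _
            rw [Finset.card_powersetCard, Finset.card_univ, Fintype.card_fin]
        _ ≤ (n + r).choose r := sum_choose_le n r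
    calc (Spair i).card
        ≤ _ := Finset.card_le_card hsub2
      _ ≤ ∑ A ∈ (Finset.univ.filter fun A : Finset (Fin n) => n ≤ A.card + r),
            ({A} ×ˢ (Cbig.filter fun c => m ≤ c.support.card ∧ c.support.card ≤ m + r * s ∧
              monDeg c + ∑ j ∈ A, deg i j = ℓ + (n - r))).card := Finset.card_biUnion_le
      _ ≤ ∑ A ∈ (Finset.univ.filter fun A : Finset (Fin n) => n ≤ A.card + r),
            (r * s + 1) * (N.choose (m + r * s) * (ℓ + n - r - 1).choose (m + r * s - 1)) := by
          apply Finset.sum_le_sum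
          intro A _
          rw [Finset.card_product, Finset.card_singleton, one_mul]
          exact hCset A
      _ = (Finset.univ.filter fun A : Finset (Fin n) => n ≤ A.card + r).card *
            ((r * s + 1) * (N.choose (m + r * s) * (ℓ + n - r - 1).choose (m + r * s - 1))) := by
          rw [Finset.sum_const, smul_eq_mul]
      _ ≤ (n + r).choose r *
            ((r * s + 1) * (N.choose (m + r * s) * (ℓ + n - r - 1).choose (m + r * s - 1))) :=
          Nat.mul_le_mul_right _ hAfinscard
  refine le_trans hGcard ?_
  calc ∑ i : Fin T, (Spair i).card
      ≤ ∑ _i : Fin T, (n + r).choose r * ((r * s + 1) * (N.choose (m + r * s) *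
          (ℓ + n - r - 1).choose (m + r * s - 1))) := Finset.sum_le_sum fun i _ => hSpaircard i
    _ = T * ((n + r).choose r * ((r * s + 1) * (N.choose (m + r * s) *
          (ℓ + n - r - 1).choose (m + r * s - 1)))) := by
        rw [Finset.sum_const, Finset.card_univ, Fintype.card_fin, smul_eq_mul]
    _ ≤ T * ((n - r + 1) * (r * s + 1) * (n + r).choose r * N.choose (m + r * s) *
          (ℓ + n - r - 1).choose (m + r * s - 1)) := by
        apply Nat.mul_le_mul_left
        calc (n + r).choose r * ((r * s + 1) * (N.choose (m + r * s) *
              (ℓ + n - r - 1).choose (m + r * s - 1)))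
            ≤ (n - r + 1) * ((n + r).choose r * ((r * s + 1) * (N.choose (m + r * s) *
              (ℓ + n - r - 1).choose (m + r * s - 1)))) :=
              Nat.le_mul_of_pos_left _ (by omega)
          _ = (n - r + 1) * (r * s + 1) * (n + r).choose r * N.choose (m + r * s) *
              (ℓ + n - r - 1).choose (m + r * s - 1) := by ring
end

section
/- Let n = 2^k, let d < n, and let r be a positive integer with n − r > d and r < d − 1. Let S ⊆ 𝔽_n be any set of r rows. Then for every tuple (j_i)_{i∈S} ∈ 𝔽_n^S, writing α = Π_{i∈S} x_{i,j_i}, the partial derivative ∂_α(NW_d) is a nonzero polynomial, and the map (j_i)_{i∈S} ↦ ∂_α(NW_d) is injective; hence the set {∂_α(NW_d) : α ∈ M^S} consists of exactly n^r distinct nonzero polynomials. -/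
open MvPolynomial

/-- The Nisan–Wigderson polynomial `NW_d`, a polynomial in the variables
`x_{i,j}`, `i, j ∈ F`, given by `Σ_f Π_i x_{i, f(i)}` where `f` ranges over the
(coefficient vectors of) univariate polynomials of degree at most `d - 1`. -/
noncomputable def NW (F : Type*) [Field F] [Fintype F] (d : ℕ) :
    MvPolynomial (F × F) F :=
  ∑ a : Fin d → F, ∏ i : F, MvPolynomial.X (i, ∑ j : Fin d, a j * i ^ (j : ℕ))

section Aux
variable {σ F : Type*} [CommSemiring F]

lemma derivList_cons (x : σ) (L : List σ) (P : MvPolynomial σ F) :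
    derivList (x :: L) P = pderiv x (derivList L P) := rfl

lemma derivList_sum {ι : Type*} (L : List σ) (s : Finset ι) (f : ι → MvPolynomial σ F) :
    derivList L (∑ i ∈ s, f i) = ∑ i ∈ s, derivList L (f i) := by
  induction L with
  | nil => rfl
  | cons x L ih => rw [derivList_cons, ih, map_sum]; rfl

lemma derivMon_sum {ι : Type*} (γ : σ →₀ ℕ) (s : Finset ι) (f : ι → MvPolynomial σ F) :
    derivMon γ (∑ i ∈ s, f i) = ∑ i ∈ s, derivMon γ (f i) :=
  derivList_sum _ _ _

lemma list_single_sum_apply [DecidableEq σ] (L : List σ) (a : σ) :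
    ((L.map (fun x => Finsupp.single x (1:ℕ))).sum) a = L.count a := by
  induction L with
  | nil => simp
  | cons x L ih =>
    simp only [List.map_cons, List.sum_cons, Finsupp.add_apply, ih, List.count_cons,
      Finsupp.single_apply]
    by_cases h : x = a
    · subst h; simp [Nat.add_comm]
    · simp [h, Ne.symm h, Nat.add_comm]

lemma derivList_monomial_ml [DecidableEq σ] (L : List σ) (hL : L.Nodup)
    (m : σ →₀ ℕ) (hm : ∀ x, m x ≤ 1) :
    derivList L (monomial m (1:F)) =
      if ∀ x ∈ L, m x = 1 then
        monomial (m - (L.map (fun x => Finsupp.single x 1)).sum) 1 else 0 := by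
  induction L with
  | nil => simp [derivList]
  | cons x L ih =>
    have hx : x ∉ L := (List.nodup_cons.mp hL).1
    rw [derivList_cons, ih (List.nodup_cons.mp hL).2]
    set γ' : σ →₀ ℕ := (L.map (fun x => Finsupp.single x (1:ℕ))).sum with hγ'
    have hγx : γ' x = 0 := by
      rw [hγ', list_single_sum_apply]; exact List.count_eq_zero.mpr hx
    by_cases h : ∀ y ∈ L, m y = 1
    · rw [if_pos h, pderiv_monomial]
      have hsub : (m - γ') x = m x := by
        rw [Finsupp.tsub_apply, hγx, Nat.sub_zero]
      by_cases hmx : m x = 1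
      · rw [if_pos (by intro y hy; rcases List.mem_cons.mp hy with rfl | hy; exacts [hmx, h y hy])]
        have hexp : m - γ' - Finsupp.single x 1 =
            m - (Finsupp.single x 1 + γ') := by
          rw [tsub_tsub, add_comm]
        rw [hexp]
        simp [hsub, hmx]
        rfl
      · have hmx0 : m x = 0 := by have := hm x; omega
        rw [if_neg (by intro hall; exact hmx (hall x List.mem_cons_self))]
        rw [hsub, hmx0]
        simp
    · rw [if_neg h, map_zero,
        if_neg (by intro hall; exact h fun y hy => hall y (List.mem_cons_of_mem _ hy))]

open Classical in
lemma derivMon_monomial_ml (γ m : σ →₀ ℕ) (hγ : ∀ x, γ x ≤ 1) (hm : ∀ x, m x ≤ 1) :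
    derivMon γ (monomial m (1:F)) =
      if ∀ x, γ x = 1 → m x = 1 then monomial (m - γ) 1 else 0 := by
  classical
  set L := (Finsupp.toMultiset γ).toList with hLdef
  have hcount : ∀ a, L.count a = γ a := fun a => by
    rw [hLdef, ← Multiset.coe_count, Multiset.coe_toList, Finsupp.count_toMultiset]
  have hnodup : L.Nodup := by
    rw [hLdef, ← Multiset.coe_nodup, Multiset.coe_toList]
    exact Multiset.nodup_iff_count_le_one.mpr
      (fun a => by rw [Finsupp.count_toMultiset]; exact hγ a)
  have hsum : (L.map (fun x => Finsupp.single x (1:ℕ))).sum = γ := by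
    ext a; rw [list_single_sum_apply, hcount]
  have hmem : ∀ x, x ∈ L ↔ γ x = 1 := fun x => by
    rw [← List.count_pos_iff, hcount]
    have := hγ x; omega
  have h0 : derivMon γ (monomial m (1:F)) = derivList L (monomial m 1) := rfl
  rw [h0, derivList_monomial_ml L hnodup m hm, hsum]
  exact if_congr ⟨fun h x hx => h x ((hmem x).mpr hx), fun h x hx => h x ((hmem x).mp hx)⟩ rfl rfl

lemma prod_X_monomial {ι : Type*} (s : Finset ι) (g : ι → σ) :
    (∏ i ∈ s, (X (g i) : MvPolynomial σ F)) = monomial (∑ i ∈ s, Finsupp.single (g i) 1) 1 := by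
  classical
  induction s using Finset.induction with
  | empty => simp
  | insert _ _ h ih => rw [Finset.prod_insert h, Finset.sum_insert h, ih, X, monomial_mul, one_mul]

end Aux

section Defs
variable {F : Type} [Field F] [Fintype F]

/-- The evaluation of the univariate polynomial with coefficient vector `a`. -/
noncomputable def fA (d : ℕ) (a : Fin d → F) (i : F) : F :=
  ∑ jj : Fin d, a jj * i ^ (jj : ℕ)

/-- The exponent vector of the monomial of `NW` indexed by `a`. -/
noncomputable def mA (d : ℕ) (a : Fin d → F) : (F × F) →₀ ℕ :=
  ∑ i : F, Finsupp.single (i, fA d a i) 1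

/-- The univariate polynomial with coefficient vector `a`. -/
noncomputable def pA (d : ℕ) (a : Fin d → F) : Polynomial F :=
  ∑ t : Fin d, Polynomial.C (a t) * Polynomial.X ^ (t : ℕ)

/-- The exponent vector `γ` of the monomial `α` determined by `j`. -/
noncomputable def Gam (S : Finset F) (j : S → F) : (F × F) →₀ ℕ :=
  ∑ i ∈ S.attach, Finsupp.single ((i : F), j i) 1

lemma fA_eval (d : ℕ) (a : Fin d → F) (i : F) : fA d a i = (pA d a).eval i := by
  rw [fA, pA, Polynomial.eval_finset_sum]
  exact Finset.sum_congr rfl fun t _ => by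
    rw [Polynomial.eval_mul, Polynomial.eval_C, Polynomial.eval_pow, Polynomial.eval_X]

lemma pA_coeff (d : ℕ) (a : Fin d → F) (t : Fin d) : (pA d a).coeff (t : ℕ) = a t := by
  classical
  rw [pA, Polynomial.finset_sum_coeff]
  rw [Finset.sum_eq_single t]
  · simp
  · intro u _ hu
    rw [Polynomial.coeff_C_mul, Polynomial.coeff_X_pow,
      if_neg (fun h => hu (Fin.val_injective h).symm), mul_zero]
  · simp

lemma pA_inj (d : ℕ) (a a' : Fin d → F) (h : pA d a = pA d a') : a = a' := by
  funext t
  rw [← pA_coeff d a t, ← pA_coeff d a' t, h]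

lemma pA_natDegree_le (d : ℕ) (hd : 1 ≤ d) (a : Fin d → F) : (pA d a).natDegree ≤ d - 1 := by
  rw [pA]
  apply Polynomial.natDegree_sum_le_of_forall_le
  intro t _
  refine le_trans (Polynomial.natDegree_C_mul_le _ _) ?_
  rw [Polynomial.natDegree_X_pow]
  omega

lemma mA_apply_eq (d : ℕ) (a : Fin d → F) {i c : F} (h : fA d a i = c) :
    mA d a (i, c) = 1 := by
  classical
  rw [mA, Finsupp.finset_sum_apply, Finset.sum_eq_single i]
  · rw [Finsupp.single_apply, if_pos (by rw [h])]
  · intro i' _ hne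
    rw [Finsupp.single_apply, if_neg (by simp [Prod.ext_iff]; intro hh; exact absurd hh hne)]
  · simp

lemma mA_apply_ne (d : ℕ) (a : Fin d → F) {i c : F} (h : fA d a i ≠ c) :
    mA d a (i, c) = 0 := by
  classical
  rw [mA, Finsupp.finset_sum_apply]
  apply Finset.sum_eq_zero
  intro i' _
  rw [Finsupp.single_apply, if_neg]
  simp only [Prod.mk.injEq, not_and]
  rintro rfl
  exact fun hc => h hc

lemma mA_le (d : ℕ) (a : Fin d → F) (x : F × F) : mA d a x ≤ 1 := by
  classical
  obtain ⟨i, c⟩ := x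
  by_cases h : fA d a i = c
  · rw [mA_apply_eq d a h]
  · rw [mA_apply_ne d a h]; omega

lemma Gam_pos (S : Finset F) (j : S → F) {i c : F} (h : i ∈ S) (hc : j ⟨i, h⟩ = c) :
    Gam S j (i, c) = 1 := by
  classical
  rw [Gam, Finsupp.finset_sum_apply, Finset.sum_eq_single (⟨i, h⟩ : {x // x ∈ S})]
  · rw [Finsupp.single_apply, if_pos (by rw [hc])]
  · intro i' _ hne
    rw [Finsupp.single_apply, if_neg]
    simp only [Prod.mk.injEq, not_and]
    intro hh
    exact (hne (Subtype.ext hh)).elim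
  · simp

lemma Gam_zero_not_mem (S : Finset F) (j : S → F) {i : F} (c : F) (h : i ∉ S) :
    Gam S j (i, c) = 0 := by
  classical
  rw [Gam, Finsupp.finset_sum_apply]
  apply Finset.sum_eq_zero
  intro i' _
  rw [Finsupp.single_apply, if_neg]
  simp only [Prod.mk.injEq, not_and]
  intro hh
  exact (h (hh ▸ i'.2)).elim

lemma Gam_zero_ne (S : Finset F) (j : S → F) {i c : F} (h : i ∈ S) (hc : j ⟨i, h⟩ ≠ c) :
    Gam S j (i, c) = 0 := by
  classical
  rw [Gam, Finsupp.finset_sum_apply]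
  apply Finset.sum_eq_zero
  intro i' _
  rw [Finsupp.single_apply, if_neg]
  simp only [Prod.mk.injEq, not_and]
  rintro rfl
  intro hcc
  exact hc ((congrArg j (Subtype.coe_eta i' h)).trans hcc)

lemma Gam_le (S : Finset F) (j : S → F) (x : F × F) : Gam S j x ≤ 1 := by
  classical
  obtain ⟨i, c⟩ := x
  by_cases h : i ∈ S
  · by_cases hc : j ⟨i, h⟩ = c
    · rw [Gam_pos S j h hc]
    · rw [Gam_zero_ne S j h hc]; omega
  · rw [Gam_zero_not_mem S j c h]; omega

lemma NW_eq_sum_monomial (d : ℕ) : NW F d = ∑ a : Fin d → F, monomial (mA d a) (1 : F) := by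
  rw [NW]
  exact Finset.sum_congr rfl fun a _ => prod_X_monomial Finset.univ (fun i => (i, fA d a i))

lemma cond_iff (d : ℕ) (S : Finset F) (a : Fin d → F) (j : S → F) :
    (∀ x, Gam S j x = 1 → mA d a x = 1) ↔ (∀ i : S, fA d a i = j i) := by
  constructor
  · intro h i
    have h1 : Gam S j ((i : F), j i) = 1 :=
      Gam_pos S j i.2 (by rw [Subtype.coe_eta])
    have h2 := h _ h1
    by_contra hne
    rw [mA_apply_ne d a hne] at h2
    exact absurd h2 (by omega)
  · intro h x hx
    obtain ⟨i, c⟩ := x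
    by_cases hiS : i ∈ S
    · by_cases hc : j ⟨i, hiS⟩ = c
      · exact mA_apply_eq d a ((h ⟨i, hiS⟩).trans hc)
      · rw [Gam_zero_ne S j hiS hc] at hx
        exact absurd hx (by omega)
    · rw [Gam_zero_not_mem S j c hiS] at hx
      exact absurd hx (by omega)

end Defs

/-- Let `n = 2^k`, `d < n`, `r` a positive integer with `n - r > d` and
`r < d - 1`, and `S ⊆ 𝔽_n` a set of `r` rows. For every tuple `(j_i)_{i ∈ S}`, writing
`α = Π_{i ∈ S} x_{i, j_i}`, the partial derivative `∂_α NW_d` is nonzero; the map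
`(j_i) ↦ ∂_α NW_d` is injective; hence `{∂_α NW_d : α ∈ M^S}` consists of exactly `n^r`
distinct nonzero polynomials. -/
theorem stmt5 (k d r : ℕ) (F : Type) [Field F] [Fintype F]
    (hcard : Fintype.card F = 2 ^ k) (hd1 : 1 ≤ d) (hdn : d + r < 2 ^ k)
    (hr : 0 < r) (hrd : r + 1 < d) (S : Finset F) (hS : S.card = r) :
    (∀ j : S → F,
      derivMon (∑ i ∈ S.attach, Finsupp.single ((i : F), j i) 1) (NW F d) ≠ 0) ∧
    Function.Injective (fun j : S → F =>
      derivMon (∑ i ∈ S.attach, Finsupp.single ((i : F), j i) 1) (NW F d)) ∧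
    (Set.range fun j : S → F =>
        derivMon (∑ i ∈ S.attach, Finsupp.single ((i : F), j i) 1) (NW F d)).ncard =
      (2 ^ k) ^ r := by
  classical
  have hGam : ∀ j : S → F,
      (∑ i ∈ S.attach, Finsupp.single ((i : F), j i) 1) = Gam S j := fun _ => rfl
  simp only [hGam]
  -- derivative formula
  have hD : ∀ j : S → F, derivMon (Gam S j) (NW F d) =
      ∑ a : Fin d → F, if (∀ i : S, fA d a i = j i)
        then monomial (mA d a - Gam S j) (1:F) else 0 := by
    intro j
    rw [NW_eq_sum_monomial, derivMon_sum]
    refine Finset.sum_congr rfl fun a _ => ?_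
    rw [derivMon_monomial_ml _ _ (Gam_le S j) (mA_le d a)]
    simp only [cond_iff d S a j]
  have hcoeff : ∀ (j : S → F) (μ : (F × F) →₀ ℕ),
      coeff μ (derivMon (Gam S j) (NW F d)) =
      ∑ a : Fin d → F,
        if ((∀ i : S, fA d a i = j i) ∧ mA d a - Gam S j = μ) then (1:F) else 0 := by
    intro j μ
    rw [hD, MvPolynomial.coeff_sum]
    refine Finset.sum_congr rfl fun a _ => ?_
    by_cases h1 : ∀ i : S, fA d a i = j i
    · rw [if_pos h1, coeff_monomial]
      by_cases h2 : mA d a - Gam S j = μ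
      · rw [if_pos h2, if_pos ⟨h1, h2⟩]
      · rw [if_neg h2, if_neg (fun hc => h2 hc.2)]
    · rw [if_neg h1, if_neg (fun hc => h1 hc.1), coeff_zero]
  -- uniqueness of the coefficient vector from monomial data off S
  have hkey : ∀ (j j' : S → F) (a a' : Fin d → F),
      (∀ i : S, fA d a i = j i) → (∀ i : S, fA d a' i = j' i) →
      mA d a - Gam S j = mA d a' - Gam S j' → pA d a = pA d a' := by
    intro j j' a a' ha ha' hmon
    have hoff : ∀ i ∈ Sᶜ, fA d a i = fA d a' i := by
      intro i hi
      have hiS : i ∉ S := Finset.mem_compl.mp hi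
      have h1 : (mA d a - Gam S j) (i, fA d a i) = 1 := by
        rw [Finsupp.tsub_apply, Gam_zero_not_mem S j _ hiS, mA_apply_eq d a rfl]
      rw [hmon, Finsupp.tsub_apply, Gam_zero_not_mem S j' _ hiS, Nat.sub_zero] at h1
      by_contra hne
      rw [mA_apply_ne d a' (fun hh => hne hh.symm)] at h1
      exact absurd h1 (by omega)
    have hq : pA d a - pA d a' = 0 := by
      apply Polynomial.eq_zero_of_natDegree_lt_card_of_eval_eq_zero' _ Sᶜ
      · intro i hi
        rw [Polynomial.eval_sub, ← fA_eval, ← fA_eval, hoff i hi, sub_self]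
      · have hc : (Sᶜ : Finset F).card = 2 ^ k - r := by
          rw [Finset.card_compl, hS, hcard]
        have hd' : (pA d a - pA d a').natDegree ≤ d - 1 :=
          le_trans (Polynomial.natDegree_sub_le _ _)
            (max_le (pA_natDegree_le d hd1 a) (pA_natDegree_le d hd1 a'))
        rw [hc]; omega
    exact sub_eq_zero.mp hq
  -- existence via Lagrange interpolation
  have hexist : ∀ j : S → F, ∃ a₀ : Fin d → F, ∀ i : S, fA d a₀ i = j i := by
    intro j
    set jf : F → F := fun i => if h : i ∈ S then j ⟨i, h⟩ else 0 with hjf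
    set p := Lagrange.interpolate S id jf with hp
    have hdeg : p.degree < S.card := Lagrange.degree_interpolate_lt _ (Set.injOn_id _)
    have hnd : p.natDegree < d := by
      rcases eq_or_ne p 0 with h0 | h0
      · rw [h0]; simpa using Nat.lt_of_lt_of_le Nat.zero_lt_one hd1
      · rw [Polynomial.natDegree_lt_iff_degree_lt h0]
        refine hdeg.trans_le ?_
        exact_mod_cast Nat.cast_le.mpr (by omega : S.card ≤ d)
    refine ⟨fun t => p.coeff (t : ℕ), ?_⟩
    rintro ⟨iv, hiv⟩
    have heq : fA d (fun t => p.coeff (t : ℕ)) iv = p.eval iv := by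
      rw [fA, Polynomial.eval_eq_sum_range' hnd]
      exact Fin.sum_univ_eq_sum_range (fun t => p.coeff t * iv ^ t) d
    show fA d (fun t => p.coeff (t : ℕ)) iv = j ⟨iv, hiv⟩
    rw [heq]
    have h2 := Lagrange.eval_interpolate_at_node (v := id) (r := jf) (Set.injOn_id _) hiv
    simp only [id_eq] at h2
    rw [hp, h2]
    simp only [hjf]
    rw [dif_pos hiv]
  -- uniqueness of a₀ realizing a given monomial
  have huniq : ∀ (j : S → F) (a₀ : Fin d → F), (∀ i : S, fA d a₀ i = j i) →
      ∀ a : Fin d → F, a ≠ a₀ →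
      ¬((∀ i : S, fA d a i = j i) ∧ mA d a - Gam S j = mA d a₀ - Gam S j) := by
    rintro j a₀ ha₀ a hne ⟨h1, h2⟩
    exact hne (pA_inj d a a₀ (hkey j j a a₀ h1 ha₀ h2))
  have hcoeff_one : ∀ (j : S → F) (a₀ : Fin d → F), (∀ i : S, fA d a₀ i = j i) →
      coeff (mA d a₀ - Gam S j) (derivMon (Gam S j) (NW F d)) = 1 := by
    intro j a₀ ha₀
    rw [hcoeff, Finset.sum_eq_single a₀]
    · rw [if_pos ⟨ha₀, rfl⟩]
    · intro a _ hne
      rw [if_neg (huniq j a₀ ha₀ a hne)]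
    · intro h; exact absurd (Finset.mem_univ a₀) h
  -- nonvanishing
  have hne0 : ∀ j : S → F, derivMon (Gam S j) (NW F d) ≠ 0 := by
    intro j h0
    obtain ⟨a₀, ha₀⟩ := hexist j
    have h1 := hcoeff_one j a₀ ha₀
    rw [h0, coeff_zero] at h1
    exact one_ne_zero h1.symm
  -- injectivity
  have hinj : Function.Injective (fun j : S → F => derivMon (Gam S j) (NW F d)) := by
    intro j j' heq
    simp only at heq
    obtain ⟨a₀, ha₀⟩ := hexist j
    have h1 : coeff (mA d a₀ - Gam S j) (derivMon (Gam S j') (NW F d)) ≠ 0 := by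
      rw [← heq, hcoeff_one j a₀ ha₀]
      exact one_ne_zero
    rw [hcoeff] at h1
    obtain ⟨a', -, ha'⟩ := Finset.exists_ne_zero_of_sum_ne_zero h1
    have hsplit : (∀ i : S, fA d a' i = j' i) ∧
        mA d a' - Gam S j' = mA d a₀ - Gam S j := by
      by_contra hc
      rw [if_neg hc] at ha'
      exact ha' rfl
    have hpp : pA d a₀ = pA d a' := hkey j j' a₀ a' ha₀ hsplit.1 hsplit.2.symm
    funext i
    rw [← ha₀ i, ← hsplit.1 i, fA_eval, fA_eval, hpp]
  refine ⟨hne0, hinj, ?_⟩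
  rw [← Set.image_univ, Set.ncard_image_of_injective _ hinj, Set.ncard_univ,
    Nat.card_eq_fintype_card, Fintype.card_fun, hcard, Fintype.card_coe, hS]
end
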